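/- Let D be a completely integrable (involutive) distribution given as the common kernel of 1-forms ω¹,…,ωⁿ, and let X be a complete vector field belonging to D. Then for every t, the pulled-back forms (Fl^X_t)*ωⁱ vanish on D. -/

import Mathlib

noncomputable section

variable {E : Type*} [NormedAddCommGroup E] [NormedSpace ℝ E]

/-- Lie bracket of vector fields on a vector space. -/
def lieBracket (X Y : E → E) : E → E :=
  fun x => fderiv ℝ Y x (X x) - fderiv ℝ X x (Y x)

/-- Smooth sections of the distribution `D`. -/
def Sec (D : E → Submodule ℝ E) : Set (E → E) :=
  {X | ContDiff ℝ (⊤ : ℕ∞) X ∧ ∀ x : E, X x ∈ D x}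

open Set Metric Real Filter Topology

set_option maxHeartbeats 1600000

lemma aux_one_le_inf : (1 : WithTop ℕ∞) ≤ ((⊤ : ℕ∞) : WithTop ℕ∞) := by exact_mod_cast le_top

lemma aux_inf_ne_zero : ((⊤ : ℕ∞) : WithTop ℕ∞) ≠ 0 := by simp

/-- Determinant of a matrix of smooth functions is smooth. -/
lemma aux_contDiff_det {m : ℕ} {A : E → Matrix (Fin m) (Fin m) ℝ}
    (hA : ∀ k l, ContDiff ℝ (⊤ : ℕ∞) fun ζ => A ζ k l) :
    ContDiff ℝ (⊤ : ℕ∞) fun ζ => (A ζ).det := by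
  have hprod : ∀ (σ : Equiv.Perm (Fin m)) (s : Finset (Fin m)),
      ContDiff ℝ (⊤ : ℕ∞) fun ζ => ∏ i ∈ s, A ζ (σ i) i := by
    intro σ s
    induction s using Finset.induction with
    | empty => simpa using contDiff_const
    | insert _ _ h ih =>
      simp_rw [Finset.prod_insert h]
      exact (hA _ _).mul ih
  simp_rw [Matrix.det_apply']
  exact ContDiff.sum fun σ _ => contDiff_const.mul (hprod σ Finset.univ)

/-- A family of independent continuous functionals admits a dual family of vectors. -/
lemma aux_dual_family {n : ℕ} (f : Fin n → E →L[ℝ] ℝ) (hf : LinearIndependent ℝ f) :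
    ∃ u : Fin n → E, ∀ k j, f k (u j) = if k = j then 1 else 0 := by
  classical
  have hsurj : Function.Surjective (LinearMap.pi fun k => (f k : E →ₗ[ℝ] ℝ)) := by
    by_contra h
    rw [← LinearMap.range_eq_top, ← Ne, ← lt_top_iff_ne_top] at h
    obtain ⟨φ, hφ0, hle⟩ := Submodule.exists_le_ker_of_lt_top _ h
    set a : Fin n → ℝ := fun k => φ (fun j => if k = j then 1 else 0) with ha
    have hav : ∀ v : E, ∑ k, a k * f k v = 0 := by
      intro v
      have hmem : (fun k => f k v) ∈ LinearMap.range (LinearMap.pi fun k => (f k : E →ₗ[ℝ] ℝ)) :=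
        ⟨v, rfl⟩
      have h0 := LinearMap.mem_ker.1 (hle hmem)
      calc ∑ k, a k * f k v = φ fun k => f k v := by
            rw [LinearMap.pi_apply_eq_sum_univ φ (fun k => f k v)]
            simp [a, mul_comm]
        _ = 0 := h0
    have ha0 : ∀ k, a k = 0 := by
      refine Fintype.linearIndependent_iff.1 hf a ?_
      apply ContinuousLinearMap.ext
      intro v
      simpa [mul_comm] using hav v
    have hphi : φ = 0 := by
      apply LinearMap.ext; intro x
      rw [LinearMap.pi_apply_eq_sum_univ φ x]
      have h2 : ∀ i, φ (fun j => if i = j then 1 else 0) = 0 := ha0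
      simp [h2]
    exact hφ0 hphi
  choose u hu using fun j => hsurj (Pi.single j 1)
  refine ⟨u, fun k j => ?_⟩
  have h1 := congrFun (hu j) k
  simp only [LinearMap.pi_apply, ContinuousLinearMap.coe_coe] at h1
  rw [h1, Pi.single_apply]

/-- Through every point of the distribution there is a global smooth section. -/
lemma aux_exists_section {n : ℕ} (ω : Fin n → E → E →L[ℝ] ℝ)
    (hω : ∀ i, ContDiff ℝ (⊤ : ℕ∞) (ω i))
    (hind : ∀ x : E, LinearIndependent ℝ fun i => ω i x)
    (D : E → Submodule ℝ E)
    (hD : ∀ x : E, D x = ⨅ i, LinearMap.ker (ω i x : E →ₗ[ℝ] ℝ))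
    (z₀ : E) (u : E) (hu : u ∈ D z₀) :
    ∃ U ∈ Sec D, U z₀ = u := by
  classical
  obtain ⟨u', hu'⟩ := aux_dual_family (fun k => ω k z₀) (hind z₀)
  set Mat : E → Matrix (Fin n) (Fin n) ℝ := fun ζ => Matrix.of fun k l => ω k ζ (u' l) with hMat
  set c : E → Fin n → ℝ := fun ζ k => ω k ζ u with hc
  set U : E → E := fun ζ =>
    (Mat ζ).det • u - ∑ j, (Matrix.cramer (Mat ζ) (c ζ) j) • u' j with hUdef
  have hMatsm : ∀ k l, ContDiff ℝ (⊤:ℕ∞) fun ζ => Mat ζ k l := fun k l =>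
    (hω k).clm_apply contDiff_const
  have hcsm : ∀ k, ContDiff ℝ (⊤:ℕ∞) fun ζ => c ζ k := fun k =>
    (hω k).clm_apply contDiff_const
  have hdet : ContDiff ℝ (⊤:ℕ∞) fun ζ => (Mat ζ).det := aux_contDiff_det hMatsm
  have hcr : ∀ j, ContDiff ℝ (⊤:ℕ∞) fun ζ => Matrix.cramer (Mat ζ) (c ζ) j := by
    intro j
    simp_rw [Matrix.cramer_apply]
    apply aux_contDiff_det
    intro k l
    simp_rw [Matrix.updateCol_apply]
    by_cases hl : l = j
    · simpa [hl] using hcsm k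
    · simpa [hl] using hMatsm k l
  have hUsm : ContDiff ℝ (⊤:ℕ∞) U := by
    rw [hUdef]
    exact (hdet.smul contDiff_const).sub (ContDiff.sum fun j _ => (hcr j).smul contDiff_const)
  have hUmem : ∀ ζ, U ζ ∈ D ζ := by
    intro ζ
    rw [hD]
    refine Submodule.mem_iInf _ |>.2 fun k => LinearMap.mem_ker.2 ?_
    have e1 : ω k ζ (U ζ) =
        (Mat ζ).det * c ζ k - ∑ j, Matrix.cramer (Mat ζ) (c ζ) j * Mat ζ k j := by
      simp only [hUdef, map_sub, map_smul, map_sum, smul_eq_mul]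
      rfl
    have hmv := congrFun (Matrix.mulVec_cramer (Mat ζ) (c ζ)) k
    simp only [Matrix.mulVec, dotProduct, Pi.smul_apply, smul_eq_mul] at hmv
    have e2 : ∑ j, Matrix.cramer (Mat ζ) (c ζ) j * Mat ζ k j
        = ∑ j, Mat ζ k j * Matrix.cramer (Mat ζ) (c ζ) j :=
      Finset.sum_congr rfl fun j _ => mul_comm _ _
    rw [ContinuousLinearMap.coe_coe, e1, e2, hmv, sub_self]
  have hM1 : Mat z₀ = 1 := by
    ext k l
    simp [hMat, hu' k l, Matrix.one_apply]
  have hc0 : c z₀ = 0 := by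
    funext k
    have := Submodule.mem_iInf _ |>.1 (by rw [hD z₀] at hu; exact hu) k
    simpa [hc] using LinearMap.mem_ker.1 this
  have hUz : U z₀ = u := by
    rw [hUdef]
    simp [hM1, hc0, Matrix.det_one]
  exact ⟨U, ⟨hUsm, hUmem⟩, hUz⟩

/-- Key involutivity computation: the "Lie derivative" of `ω i` along `X` vanishes on `D`. -/
lemma aux_key {n : ℕ} (ω : Fin n → E → E →L[ℝ] ℝ)
    (hω : ∀ i, ContDiff ℝ (⊤ : ℕ∞) (ω i))
    (hind : ∀ x : E, LinearIndependent ℝ fun i => ω i x)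
    (D : E → Submodule ℝ E)
    (hD : ∀ x : E, D x = ⨅ i, LinearMap.ker (ω i x : E →ₗ[ℝ] ℝ))
    (hinv : ∀ Y ∈ Sec D, ∀ Z ∈ Sec D, ∀ x : E, lieBracket Y Z x ∈ D x)
    (X : E → E) (hX : X ∈ Sec D) (i : Fin n) (z : E) (u : E) (hu : u ∈ D z) :
    fderiv ℝ (ω i) z (X z) u + ω i z (fderiv ℝ X z u) = 0 := by
  obtain ⟨U, hU, hUz⟩ := aux_exists_section ω hω hind D hD z u hu
  obtain ⟨hUsm, hUmem⟩ := hU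
  have hzero : (fun ζ => ω i ζ (U ζ)) = fun _ => (0:ℝ) := by
    funext ζ
    have h1 := hUmem ζ
    rw [hD] at h1
    exact LinearMap.mem_ker.1 (Submodule.mem_iInf _ |>.1 h1 i)
  have hd1 : fderiv ℝ (fun ζ => ω i ζ (U ζ)) z = 0 := by
    rw [hzero]; exact fderiv_const_apply 0
  have hdiff_ω : DifferentiableAt ℝ (ω i) z := ((hω i).differentiable aux_inf_ne_zero) z
  have hdiff_U : DifferentiableAt ℝ U z := (hUsm.differentiable aux_inf_ne_zero) z
  have hprod := fderiv_clm_apply hdiff_ω hdiff_U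
  rw [hd1] at hprod
  have h0 : ω i z (fderiv ℝ U z (X z)) + fderiv ℝ (ω i) z (X z) (U z) = 0 := by
    have := congrArg (fun (T : E →L[ℝ] ℝ) => T (X z)) hprod.symm
    simpa using this
  have hbr := hinv X hX U ⟨hUsm, hUmem⟩ z
  rw [hD] at hbr
  have hbr0 : ω i z (lieBracket X U z) = 0 :=
    LinearMap.mem_ker.1 (Submodule.mem_iInf _ |>.1 hbr i)
  have hbr1 : ω i z (fderiv ℝ U z (X z)) - ω i z (fderiv ℝ X z (U z)) = 0 := by
    rw [← map_sub]; exact hbr0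
  rw [← hUz]
  linarith

section Flow

variable (V : E → E) (ψ : ℝ → E → E)

/-- Confinement: for a short time, the flow stays in a ball. -/
lemma aux_confine
    (hψ0 : ∀ x : E, ψ 0 x = x)
    (hψd : ∀ (t : ℝ) (x : E), HasDerivAt (fun s => ψ s x) (V (ψ t x)) t)
    {y z : E} {ρ C : ℝ} (hρ : 0 < ρ) (hC0 : 0 ≤ C)
    (hC : ∀ ξ ∈ closedBall y ρ, ‖V ξ‖ ≤ C)
    (hz : z ∈ closedBall y (ρ / 2)) :
    ∀ s ∈ Icc (0:ℝ) (ρ / (2 * (C + 1))), ψ s z ∈ closedBall y ρ ∧ ‖ψ s z - z‖ ≤ C * s := by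
  have hd : (0:ℝ) < 2 * (C + 1) := by linarith
  set T := ρ / (2 * (C + 1)) with hT
  have hTpos : 0 < T := div_pos hρ hd
  have hCT : C * T < ρ / 2 := by
    have ht : T * (2 * (C + 1)) = ρ := div_mul_cancel₀ _ (ne_of_gt hd)
    nlinarith [hTpos]
  have hzρ : ‖z - y‖ ≤ ρ / 2 := by rwa [mem_closedBall, dist_eq_norm] at hz
  have hcont : Continuous fun r => ψ r z :=
    continuous_iff_continuousAt.2 fun r => (hψd r z).continuousAt
  set S := {r : ℝ | ψ r z ∈ closedBall y ρ} with hS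
  have hScl : IsClosed S := IsClosed.preimage hcont Metric.isClosed_closedBall
  set A := {σ : ℝ | σ ∈ Icc 0 T ∧ ∀ r ∈ Icc (0:ℝ) σ, ψ r z ∈ closedBall y ρ} with hA
  have hz' : z ∈ closedBall y ρ := by
    rw [mem_closedBall, dist_eq_norm]; linarith
  have h0A : (0:ℝ) ∈ A := by
    refine ⟨⟨le_refl 0, hTpos.le⟩, fun r hr => ?_⟩
    have : r = 0 := le_antisymm hr.2 hr.1
    rw [this, hψ0]; exact hz'
  have hAbdd : BddAbove A := ⟨T, fun σ hσ => hσ.1.2⟩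
  have hAne : A.Nonempty := ⟨0, h0A⟩
  set a := sSup A with haSup
  have haIcc : a ∈ Icc 0 T := ⟨le_csSup hAbdd h0A, csSup_le hAne fun σ hσ => hσ.1.2⟩
  have hmemIco : ∀ r ∈ Ico (0:ℝ) a, ψ r z ∈ closedBall y ρ := by
    intro r hr
    obtain ⟨σ, hσA, hrσ⟩ := exists_lt_of_lt_csSup hAne hr.2
    exact hσA.2 r ⟨hr.1, hrσ.le⟩
  have hmem : ∀ r ∈ Icc (0:ℝ) a, ψ r z ∈ closedBall y ρ := by
    intro r hr
    rcases eq_or_lt_of_le hr.2 with heq | hlt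
    · rcases eq_or_lt_of_le hr.1 with h0 | h0
      · rw [← h0, hψ0]; exact hz'
      · have hsub : Ico (0:ℝ) a ⊆ S := hmemIco
        have : a ∈ closure (Ico (0:ℝ) a) := by
          rw [closure_Ico (by linarith [heq ▸ h0] : (0:ℝ) ≠ a)]
          exact ⟨by linarith [heq ▸ h0], le_refl a⟩
        rw [heq]
        exact hScl.closure_subset ((closure_mono hsub) this)
    · exact hmemIco r ⟨hr.1, hlt⟩
  have hbound : ∀ r ∈ Icc (0:ℝ) a, ‖ψ r z - z‖ ≤ C * r := by
    have h := norm_image_sub_le_of_norm_deriv_le_segment'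
      (f := fun r => ψ r z) (f' := fun r => V (ψ r z)) (a := 0) (b := a) (C := C)
      (fun r hr => (hψd r z).hasDerivWithinAt)
      (fun r hr => hC _ (hmem r (Ico_subset_Icc_self hr)))
    intro r hr
    have h2 := h r hr
    simp only [hψ0, sub_zero] at h2
    exact h2
  have haT : a = T := by
    by_contra hne
    have haltT : a < T := lt_of_le_of_ne haIcc.2 hne
    have hstrict : dist (ψ a z) y < ρ := by
      rw [dist_eq_norm]
      calc ‖ψ a z - y‖ ≤ ‖ψ a z - z‖ + ‖z - y‖ := norm_sub_le_norm_sub_add_norm_sub _ _ _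
        _ ≤ C * a + ρ / 2 := add_le_add (hbound a ⟨haIcc.1, le_refl a⟩) hzρ
        _ ≤ C * T + ρ / 2 := by nlinarith [haltT.le]
        _ < ρ := by linarith
    have hopen : IsOpen {r : ℝ | dist (ψ r z) y < ρ} :=
      isOpen_lt (hcont.dist continuous_const) continuous_const
    obtain ⟨ε, hε, hball⟩ := Metric.isOpen_iff.1 hopen a hstrict
    set σ := min T (a + ε / 2) with hσ
    have hσA : σ ∈ A := by
      refine ⟨⟨le_min hTpos.le (by linarith [haIcc.1]), min_le_left _ _⟩, ?_⟩
      · intro r hr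
        rcases le_or_gt r a with hra | hra
        · exact hmem r ⟨hr.1, hra⟩
        · have h1 : r ≤ a + ε / 2 := hr.2.trans (min_le_right _ _)
          have : dist r a < ε := by
            rw [Real.dist_eq, abs_lt]; constructor <;> linarith
          exact mem_closedBall.2 (le_of_lt (hball (mem_ball.mpr this)))
    have : σ ≤ a := le_csSup hAbdd hσA
    have : a < σ := lt_min haltT (by linarith)
    linarith
  intro s hs
  rw [← haT] at hs
  exact ⟨hmem s hs, hbound s hs⟩

/-- Gronwall: two flow lines that stay in a ball where `V` is Lipschitz diverge at most
exponentially. -/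
lemma aux_close
    (hψ0 : ∀ x : E, ψ 0 x = x)
    (hψd : ∀ (t : ℝ) (x : E), HasDerivAt (fun s => ψ s x) (V (ψ t x)) t)
    {y : E} {ρ : ℝ} {L : NNReal} (hL : LipschitzOnWith L V (closedBall y ρ))
    {z z' : E} {T : ℝ}
    (hmem : ∀ r ∈ Icc (0:ℝ) T, ψ r z ∈ closedBall y ρ ∧ ψ r z' ∈ closedBall y ρ) :
    ∀ s ∈ Icc (0:ℝ) T, ‖ψ s z - ψ s z'‖ ≤ ‖z - z'‖ * exp (L * s) := by
  intro s hs
  have hcz : Continuous fun r => ψ r z :=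
    continuous_iff_continuousAt.2 fun r => (hψd r z).continuousAt
  have hcz' : Continuous fun r => ψ r z' :=
    continuous_iff_continuousAt.2 fun r => (hψd r z').continuousAt
  have key := dist_le_of_trajectories_ODE_of_mem
    (v := fun _ => V) (s := fun _ => closedBall y ρ) (K := L) (a := 0) (b := T)
    (δ := ‖z - z'‖)
    (fun _ _ => hL)
    hcz.continuousOn
    (fun r hr => (hψd r z).hasDerivWithinAt)
    (fun r hr => (hmem r (Ico_subset_Icc_self hr)).1)
    hcz'.continuousOn
    (fun r hr => (hψd r z').hasDerivWithinAt)
    (fun r hr => (hmem r (Ico_subset_Icc_self hr)).2)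
    (by rw [hψ0, hψ0, dist_eq_norm])
    s hs
  rwa [dist_eq_norm, sub_zero] at key

/-- One-sided second order estimate for the differential of the flow near time `0`. -/
lemma aux_approx (hV : ContDiff ℝ (⊤ : ℕ∞) V)
    (hψ0 : ∀ x : E, ψ 0 x = x)
    (hψd : ∀ (t : ℝ) (x : E), HasDerivAt (fun s => ψ s x) (V (ψ t x)) t)
    (hψsm : ∀ t : ℝ, ContDiff ℝ (⊤ : ℕ∞) (ψ t))
    (y : E) {ε : ℝ} (hε : 0 < ε) :
    ∃ δ > 0, ∀ s ∈ Icc (0:ℝ) δ, ∀ w : E,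
      ‖fderiv ℝ (ψ s) y w - w - s • fderiv ℝ V y w‖ ≤ ε * s * ‖w‖ := by
  have hVd : Differentiable ℝ V := hV.differentiable aux_inf_ne_zero
  set A := fderiv ℝ V y with hA
  set M := ‖A‖ with hM
  have hM0 : 0 ≤ M := norm_nonneg _
  set Eb := exp (M + 1) with hEb
  have hEb1 : 1 ≤ Eb := by rw [hEb]; apply one_le_exp; linarith
  set ε₀ := min 1 (ε / (2 * Eb)) with hε₀
  have hε₀pos : 0 < ε₀ := lt_min one_pos (div_pos hε (by linarith))
  have hε₀1 : ε₀ ≤ 1 := min_le_left _ _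
  have hε₀Eb : ε₀ * Eb ≤ ε / 2 := by
    have h1 : ε₀ ≤ ε / (2 * Eb) := min_le_right _ _
    have h2 : (ε / (2 * Eb)) * (2 * Eb) = ε := div_mul_cancel₀ _ (by positivity)
    nlinarith
  have hcontf : ContinuousAt (fderiv ℝ V) y := (hV.continuous_fderiv aux_inf_ne_zero).continuousAt
  obtain ⟨ρ', hρ'pos, hρ'⟩ : ∃ ρ' > 0, ∀ ξ ∈ closedBall y ρ', ‖fderiv ℝ V ξ - A‖ ≤ ε₀ := by
    obtain ⟨d, hd, hball⟩ := Metric.continuousAt_iff.1 hcontf ε₀ hε₀pos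
    refine ⟨d/2, by linarith, fun ξ hξ => ?_⟩
    have h1 : dist ξ y < d := lt_of_le_of_lt (mem_closedBall.1 hξ) (by linarith)
    have h2 := hball h1
    rw [dist_eq_norm] at h2
    exact h2.le
  set ρ := min ρ' 1 with hρdef
  have hρpos : 0 < ρ := lt_min hρ'pos one_pos
  have hρ1 : ρ ≤ 1 := min_le_right _ _
  have hρbound : ∀ ξ ∈ closedBall y ρ, ‖fderiv ℝ V ξ - A‖ ≤ ε₀ := fun ξ hξ =>
    hρ' ξ (closedBall_subset_closedBall (min_le_left _ _) hξ)
  set L := M + 1 with hLdef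
  have hLpos : 0 < L := by linarith
  have hfb : ∀ ξ ∈ closedBall y ρ, ‖fderiv ℝ V ξ‖ ≤ L := by
    intro ξ hξ
    have h1 := hρbound ξ hξ
    have h2 := norm_sub_norm_le (fderiv ℝ V ξ) A
    rw [hLdef]
    linarith
  have hlip : LipschitzOnWith (Real.toNNReal L) V (closedBall y ρ) := by
    refine (convex_closedBall y ρ).lipschitzOnWith_of_nnnorm_fderiv_le
      (fun ξ _ => hVd ξ) (fun ξ hξ => ?_)
    rw [← norm_toNNReal]
    exact Real.toNNReal_le_toNNReal (hfb ξ hξ)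
  have hlipnorm : ∀ a ∈ closedBall y ρ, ∀ b ∈ closedBall y ρ, ‖V a - V b‖ ≤ L * ‖a - b‖ := by
    intro a ha b hb
    have := hlip.dist_le_mul a ha b hb
    rw [dist_eq_norm, dist_eq_norm] at this
    calc ‖V a - V b‖ ≤ (Real.toNNReal L : ℝ) * ‖a - b‖ := this
      _ = L * ‖a - b‖ := by rw [Real.coe_toNNReal _ hLpos.le]
  set C := ‖V y‖ + L with hCdef
  have hC0 : 0 ≤ C := by positivity
  have hVbound : ∀ ξ ∈ closedBall y ρ, ‖V ξ‖ ≤ C := by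
    intro ξ hξ
    have h1 := hlipnorm ξ hξ y (mem_closedBall_self hρpos.le)
    have h2 : ‖ξ - y‖ ≤ 1 := by
      rw [← dist_eq_norm]
      exact (mem_closedBall.1 hξ).trans hρ1
    have h3 := norm_sub_norm_le (V ξ) (V y)
    have h4 : L * ‖ξ - y‖ ≤ L * 1 := by nlinarith [norm_nonneg (ξ - y)]
    rw [hCdef]
    linarith
  set s₁ := ρ / (2 * (C + 1)) with hs₁def
  have hs₁pos : 0 < s₁ := div_pos hρpos (by linarith)
  have hs₁le : s₁ ≤ 1 := by
    rw [hs₁def, div_le_one (by linarith)]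
    linarith
  set Q := M * L * Eb with hQdef
  have hQ0 : 0 ≤ Q := by positivity
  set s₂ := ε / (2 * (Q + 1)) with hs₂def
  have hs₂pos : 0 < s₂ := div_pos hε (by linarith)
  have hQs₂ : Q * s₂ ≤ ε / 2 := by
    have h2 : s₂ * (2 * (Q + 1)) = ε := div_mul_cancel₀ _ (by positivity)
    nlinarith [hs₂pos]
  refine ⟨min s₁ s₂, lt_min hs₁pos hs₂pos, ?_⟩
  intro s hs w
  rcases eq_or_lt_of_le hs.1 with h0 | hspos
  · have hid : ψ 0 = fun x => x := funext hψ0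
    rw [← h0]
    simp [hid, fderiv_id']
  have hsle1 : s ≤ s₁ := hs.2.trans (min_le_left _ _)
  have hsle2 : s ≤ s₂ := hs.2.trans (min_le_right _ _)
  have hstar : ∀ u : E, ‖u‖ ≤ ρ/2 → ‖ψ s (y+u) - ψ s y - u - s • A u‖ ≤ (ε * s) * ‖u‖ := by
    intro u hu
    have hyball : y ∈ closedBall y (ρ/2) := mem_closedBall_self (by linarith)
    have hyuball : y + u ∈ closedBall y (ρ/2) := by
      rw [mem_closedBall, dist_eq_norm]
      simpa using hu
    have hconf1 := aux_confine V ψ hψ0 hψd hρpos hC0 hVbound hyball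
    have hconf2 := aux_confine V ψ hψ0 hψd hρpos hC0 hVbound hyuball
    have hsub : Icc (0:ℝ) s ⊆ Icc (0:ℝ) s₁ := Icc_subset_Icc (le_refl _) hsle1
    have hmem1 : ∀ r ∈ Icc (0:ℝ) s, ψ r y ∈ closedBall y ρ := fun r hr => (hconf1 r (hsub hr)).1
    have hmem2 : ∀ r ∈ Icc (0:ℝ) s, ψ r (y+u) ∈ closedBall y ρ :=
      fun r hr => (hconf2 r (hsub hr)).1
    have hclose := aux_close V ψ hψ0 hψd hlip (z := y + u) (z' := y)
      (fun r hr => ⟨hmem2 r hr, hmem1 r hr⟩)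
    have hclose' : ∀ r ∈ Icc (0:ℝ) s, ‖ψ r (y+u) - ψ r y‖ ≤ Eb * ‖u‖ := by
      intro r hr
      have h1 := hclose r hr
      have h2 : ‖y + u - y‖ = ‖u‖ := by simp
      rw [h2] at h1
      have hr1 : r ≤ 1 := hr.2.trans (hsle1.trans hs₁le)
      have hexp : exp ((Real.toNNReal L : ℝ) * r) ≤ Eb := by
        rw [Real.coe_toNNReal _ hLpos.le, hEb]
        apply exp_le_exp.2
        rw [hLdef]
        nlinarith [hr.1]
      calc ‖ψ r (y+u) - ψ r y‖ ≤ ‖u‖ * exp ((Real.toNNReal L : ℝ) * r) := h1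
        _ ≤ ‖u‖ * Eb := by nlinarith [norm_nonneg u]
        _ = Eb * ‖u‖ := mul_comm _ _
    have hGd : ∀ r : ℝ, HasDerivAt (fun r => ψ r (y+u) - ψ r y - u)
        (V (ψ r (y+u)) - V (ψ r y)) r :=
      fun r => ((hψd r (y+u)).sub (hψd r y)).sub_const u
    have hGbound : ∀ r ∈ Icc (0:ℝ) s, ‖ψ r (y+u) - ψ r y - u‖ ≤ L * (Eb * ‖u‖) * r := by
      have h := norm_image_sub_le_of_norm_deriv_le_segment'
        (f := fun r => ψ r (y+u) - ψ r y - u)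
        (f' := fun r => V (ψ r (y+u)) - V (ψ r y)) (a := 0) (b := s) (C := L * (Eb * ‖u‖))
        (fun r _ => (hGd r).hasDerivWithinAt)
        (fun r hr => by
          have h1 := hlipnorm _ (hmem2 r (Ico_subset_Icc_self hr)) _ (hmem1 r (Ico_subset_Icc_self hr))
          have h2 := hclose' r (Ico_subset_Icc_self hr)
          nlinarith [norm_nonneg (ψ r (y+u) - ψ r y)])
      intro r hr
      have h2 := h r hr
      simp only [hψ0, sub_zero] at h2
      have h3 : y + u - y - u = 0 := by abel
      rw [h3, sub_zero] at h2
      exact h2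
    have hFd : ∀ r : ℝ, HasDerivAt (fun r => ψ r (y+u) - ψ r y - r • A u)
        (V (ψ r (y+u)) - V (ψ r y) - A u) r := by
      intro r
      refine ((hψd r (y+u)).sub (hψd r y)).sub ?_
      simpa using (hasDerivAt_id r).smul_const (A u)
    have hdiffVA : ∀ a ∈ closedBall y ρ, ∀ b ∈ closedBall y ρ,
        ‖V a - V b - A (a - b)‖ ≤ ε₀ * ‖a - b‖ := by
      intro a ha b hb
      have h := (convex_closedBall y ρ).norm_image_sub_le_of_norm_fderiv_le
        (f := fun ξ => V ξ - A ξ) (C := ε₀)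
        (fun ξ _ => (hVd ξ).sub (A.differentiableAt))
        (fun ξ hξ => by
          rw [fderiv_fun_sub (hVd ξ) A.differentiableAt, A.fderiv]
          exact hρbound ξ hξ)
        hb ha
      have h9 : V a - A a - (V b - A b) = V a - V b - A (a - b) := by
        rw [map_sub]; abel
      rw [show V a - V b - A (a - b) = V a - A a - (V b - A b) from h9.symm]
      exact h
    have hFbound : ∀ r ∈ Ico (0:ℝ) s, ‖V (ψ r (y+u)) - V (ψ r y) - A u‖ ≤
        ε₀ * (Eb * ‖u‖) + M * (L * (Eb * ‖u‖) * s) := by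
      intro r hr
      have h1 := hdiffVA _ (hmem2 r (Ico_subset_Icc_self hr)) _ (hmem1 r (Ico_subset_Icc_self hr))
      have h2 := hclose' r (Ico_subset_Icc_self hr)
      have h3 : ‖A (ψ r (y+u) - ψ r y - u)‖ ≤ M * (L * (Eb * ‖u‖) * r) := by
        calc ‖A (ψ r (y+u) - ψ r y - u)‖ ≤ M * ‖ψ r (y+u) - ψ r y - u‖ := A.le_opNorm _
          _ ≤ M * (L * (Eb * ‖u‖) * r) := by
              have := hGbound r (Ico_subset_Icc_self hr)
              nlinarith
      have h4 : V (ψ r (y+u)) - V (ψ r y) - A u =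
          (V (ψ r (y+u)) - V (ψ r y) - A (ψ r (y+u) - ψ r y))
          + A (ψ r (y+u) - ψ r y - u) := by
        simp only [map_sub]
        abel
      rw [h4]
      have h5 := norm_add_le (V (ψ r (y+u)) - V (ψ r y) - A (ψ r (y+u) - ψ r y))
        (A (ψ r (y+u) - ψ r y - u))
      have h6 : ε₀ * ‖ψ r (y+u) - ψ r y‖ ≤ ε₀ * (Eb * ‖u‖) := by nlinarith
      have h7 : M * (L * (Eb * ‖u‖) * r) ≤ M * (L * (Eb * ‖u‖) * s) := by
        have hrs : r ≤ s := hr.2.le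
        have hLE : 0 ≤ L * (Eb * ‖u‖) :=
          mul_nonneg hLpos.le (mul_nonneg (by linarith) (norm_nonneg u))
        exact mul_le_mul_of_nonneg_left (mul_le_mul_of_nonneg_left hrs hLE) hM0
      linarith
    have hF := norm_image_sub_le_of_norm_deriv_le_segment'
      (f := fun r => ψ r (y+u) - ψ r y - r • A u)
      (f' := fun r => V (ψ r (y+u)) - V (ψ r y) - A u) (a := 0) (b := s)
      (C := ε₀ * (Eb * ‖u‖) + M * (L * (Eb * ‖u‖) * s))
      (fun r _ => (hFd r).hasDerivWithinAt) hFbound s ⟨hs.1, le_refl s⟩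
    simp only [hψ0, zero_smul, sub_zero] at hF
    have hF0 : y + u - y = u := by abel
    rw [hF0] at hF
    have hre : ψ s (y+u) - ψ s y - u - s • A u = ψ s (y+u) - ψ s y - s • A u - u := by abel
    rw [hre]
    have e1 : ε₀ * (Eb * ‖u‖) ≤ ε / 2 * ‖u‖ := by nlinarith [norm_nonneg u]
    have e2 : M * L * Eb * s ≤ ε / 2 := by
      calc M * L * Eb * s = Q * s := by rw [hQdef]
        _ ≤ Q * s₂ := mul_le_mul_of_nonneg_left hsle2 hQ0
        _ ≤ ε / 2 := hQs₂
    have e2' : M * (L * (Eb * ‖u‖) * s) ≤ ε / 2 * ‖u‖ := by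
      have h10 := mul_le_mul_of_nonneg_right e2 (norm_nonneg u)
      have eq : M * (L * (Eb * ‖u‖) * s) = M * L * Eb * s * ‖u‖ := by ring
      rw [eq]; exact h10
    have esum : ε₀ * (Eb * ‖u‖) + M * (L * (Eb * ‖u‖) * s) ≤ ε * ‖u‖ := by
      have h11 := add_le_add e1 e2'
      have h12 : ε / 2 * ‖u‖ + ε / 2 * ‖u‖ = ε * ‖u‖ := by ring
      rw [h12] at h11
      exact h11
    calc ‖ψ s (y+u) - ψ s y - s • A u - u‖
        ≤ (ε₀ * (Eb * ‖u‖) + M * (L * (Eb * ‖u‖) * s)) * s := hF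
      _ ≤ (ε * ‖u‖) * s := mul_le_mul_of_nonneg_right esum hspos.le
      _ = (ε * s) * ‖u‖ := by ring
  rcases eq_or_ne w 0 with rfl | hw0
  · simp
  have hψsd : DifferentiableAt ℝ (ψ s) y := (hψsm s).differentiable aux_inf_ne_zero y
  have hline : HasDerivAt (fun h : ℝ => ψ s (y + h • w)) (fderiv ℝ (ψ s) y w) 0 := by
    have h1 : HasDerivAt (fun h : ℝ => y + h • w) w 0 := by
      simpa using ((hasDerivAt_id (0:ℝ)).smul_const w).const_add y
    have h2 : HasFDerivAt (ψ s) (fderiv ℝ (ψ s) y) ((fun h : ℝ => y + h • w) 0) := by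
      simpa using hψsd.hasFDerivAt
    exact h2.comp_hasDerivAt 0 h1
  have hslope := hasDerivAt_iff_tendsto_slope.1 hline
  have htend : Tendsto (fun h : ℝ => h⁻¹ • (ψ s (y + h • w) - ψ s y) - w - s • A w)
      (𝓝[≠] (0:ℝ)) (𝓝 (fderiv ℝ (ψ s) y w - w - s • A w)) := by
    have heq : ∀ h : ℝ, slope (fun h : ℝ => ψ s (y + h • w)) 0 h
        = h⁻¹ • (ψ s (y + h • w) - ψ s y) := by
      intro h
      rw [slope_def_module]
      simp [hψ0]
    have := (hslope.sub_const w).sub_const (s • A w)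
    refine Tendsto.congr (fun h => by rw [heq h]) this
  have hev : ∀ᶠ h in 𝓝[≠] (0:ℝ),
      ‖(fun h : ℝ => h⁻¹ • (ψ s (y + h • w) - ψ s y) - w - s • A w) h‖ ≤ ε * s * ‖w‖ := by
    have hball : ∀ᶠ h in 𝓝 (0:ℝ), ‖h • w‖ ≤ ρ / 2 := by
      have : Tendsto (fun h : ℝ => ‖h • w‖) (𝓝 0) (𝓝 ‖(0:ℝ) • w‖) :=
        (continuous_id.smul continuous_const).norm.tendsto 0
      simp only [zero_smul, norm_zero] at this
      exact this.eventually_le_const (by positivity)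
    filter_upwards [nhdsWithin_le_nhds hball, self_mem_nhdsWithin] with h hu hne
    have hne' : h ≠ 0 := hne
    have hst := hstar (h • w) hu
    have key : h⁻¹ • (ψ s (y + h • w) - ψ s y) - w - s • A w
        = h⁻¹ • (ψ s (y + h • w) - ψ s y - h • w - s • A (h • w)) := by
      rw [A.map_smul]
      match_scalars <;> field_simp
    rw [key, norm_smul]
    have hnw : ‖h • w‖ = |h| * ‖w‖ := by rw [norm_smul, Real.norm_eq_abs]
    rw [hnw] at hst
    have habs : ‖(h:ℝ)⁻¹‖ = |h|⁻¹ := by rw [Real.norm_eq_abs, abs_inv]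
    rw [habs]
    have hpos : 0 < |h| := abs_pos.2 hne'
    calc |h|⁻¹ * ‖ψ s (y + h • w) - ψ s y - h • w - s • A (h • w)‖
        ≤ |h|⁻¹ * ((ε * s) * (|h| * ‖w‖)) := by
          apply mul_le_mul_of_nonneg_left hst (by positivity)
      _ = ε * s * ‖w‖ := by field_simp
  have := le_of_tendsto htend.norm hev
  exact this

/-- The differential of the flow at a point is differentiable in time at `0`. -/
lemma aux_hasDerivAt_fderiv (hV : ContDiff ℝ (⊤ : ℕ∞) V)
    (hψ0 : ∀ x : E, ψ 0 x = x)
    (hψd : ∀ (t : ℝ) (x : E), HasDerivAt (fun s => ψ s x) (V (ψ t x)) t)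
    (hψsm : ∀ t : ℝ, ContDiff ℝ (⊤ : ℕ∞) (ψ t))
    (y w : E) :
    HasDerivAt (fun s => fderiv ℝ (ψ s) y w) (fderiv ℝ V y w) 0 := by
  set A := fderiv ℝ V y with hA
  rw [hasDerivAt_iff_isLittleO, Asymptotics.isLittleO_iff]
  intro c hc
  set ε := c / (‖w‖ + 1) with hεdef
  have hεpos : 0 < ε := div_pos hc (by positivity)
  obtain ⟨δ₁, hδ₁, hb₁⟩ := aux_approx V ψ hV hψ0 hψd hψsm y hεpos
  set V' : E → E := fun ξ => -V ξ with hV'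
  set ψ' : ℝ → E → E := fun r x => ψ (-r) x with hψ'
  have hV'sm : ContDiff ℝ (⊤:ℕ∞) V' := hV.neg
  have hψ'0 : ∀ x : E, ψ' 0 x = x := by intro x; simp [hψ', hψ0]
  have hψ'd : ∀ (t : ℝ) (x : E), HasDerivAt (fun s => ψ' s x) (V' (ψ' t x)) t := by
    intro t x
    have h1 : HasDerivAt (fun s => ψ s x) (V (ψ (0 - t) x)) (0 - t) := by
      simpa using hψd (-t) x
    have h2 := HasDerivAt.comp_const_sub (f := fun s => ψ s x) 0 t h1
    simp only [zero_sub] at h2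
    exact h2
  have hψ'sm : ∀ t : ℝ, ContDiff ℝ (⊤:ℕ∞) (ψ' t) := fun t => hψsm (-t)
  obtain ⟨δ₂, hδ₂, hb₂⟩ := aux_approx V' ψ' hV'sm hψ'0 hψ'd hψ'sm y hεpos
  have hA' : fderiv ℝ V' y = -A := by rw [hV', hA]; exact fderiv_neg
  have hεw : ε * ‖w‖ ≤ c := by
    rw [hεdef, div_mul_eq_mul_div, div_le_iff₀ (by positivity : (0:ℝ) < ‖w‖ + 1)]
    nlinarith [norm_nonneg w]
  have hmain : ∀ s : ℝ, |s| ≤ min δ₁ δ₂ → ‖fderiv ℝ (ψ s) y w - w - s • A w‖ ≤ c * |s| := by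
    intro s hsle
    rcases le_or_gt 0 s with hs0 | hs0
    · have hs1 : s ≤ δ₁ := by
        have := (abs_of_nonneg hs0) ▸ hsle
        exact this.trans (min_le_left _ _)
      have h := hb₁ s ⟨hs0, hs1⟩ w
      calc ‖fderiv ℝ (ψ s) y w - w - s • A w‖ ≤ ε * s * ‖w‖ := h
        _ = (ε * ‖w‖) * s := by ring
        _ ≤ c * s := mul_le_mul_of_nonneg_right hεw hs0
        _ = c * |s| := by rw [abs_of_nonneg hs0]
    · have habs : |s| = -s := abs_of_neg hs0
      have hs1 : -s ≤ δ₂ := by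
        have := habs ▸ hsle
        exact this.trans (min_le_right _ _)
      have h := hb₂ (-s) ⟨by linarith, hs1⟩ w
      have e1 : ψ' (-s) = ψ s := by funext ξ; simp [hψ']
      rw [e1, hA'] at h
      have e2 : fderiv ℝ (ψ s) y w - w - (-s) • (-A) w = fderiv ℝ (ψ s) y w - w - s • A w := by
        simp only [ContinuousLinearMap.neg_apply, smul_neg, neg_smul, neg_neg]
      rw [e2] at h
      calc ‖fderiv ℝ (ψ s) y w - w - s • A w‖ ≤ ε * (-s) * ‖w‖ := h
        _ = (ε * ‖w‖) * (-s) := by ring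
        _ ≤ c * (-s) := mul_le_mul_of_nonneg_right hεw (by linarith)
        _ = c * |s| := by rw [habs]
  have hf0 : fderiv ℝ (ψ 0) y w = w := by
    have hid : ψ 0 = fun ξ : E => ξ := funext hψ0
    rw [hid, fderiv_id']
    rfl
  have hmemb : ∀ᶠ s in 𝓝 (0:ℝ), |s| ≤ min δ₁ δ₂ := by
    have : Metric.closedBall (0:ℝ) (min δ₁ δ₂) ∈ 𝓝 (0:ℝ) :=
      Metric.closedBall_mem_nhds 0 (lt_min hδ₁ hδ₂)
    filter_upwards [this] with s hsmem
    rwa [Metric.mem_closedBall, Real.dist_eq, sub_zero] at hsmem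
  filter_upwards [hmemb] with s hsmem
  have := hmain s hsmem
  simpa [hf0, Real.norm_eq_abs] using this

/-- The flow group law. -/
lemma aux_group (hV : ContDiff ℝ (⊤ : ℕ∞) V)
    (hψ0 : ∀ x : E, ψ 0 x = x)
    (hψd : ∀ (t : ℝ) (x : E), HasDerivAt (fun s => ψ s x) (V (ψ t x)) t)
    (t s : ℝ) (x : E) : ψ (s + t) x = ψ s (ψ t x) := by
  set S := {s : ℝ | ψ (s + t) x = ψ s (ψ t x)} with hSdef
  have hf : ∀ s : ℝ, HasDerivAt (fun s => ψ (s + t) x) (V (ψ (s + t) x)) s := by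
    intro s
    exact (hψd (s + t) x).comp_add_const s t
  have hg : ∀ s : ℝ, HasDerivAt (fun s => ψ s (ψ t x)) (V (ψ s (ψ t x))) s :=
    fun s => hψd s (ψ t x)
  have hclosed : IsClosed S :=
    isClosed_eq (continuous_iff_continuousAt.2 fun s => (hf s).continuousAt)
      (continuous_iff_continuousAt.2 fun s => (hg s).continuousAt)
  have h0 : (0:ℝ) ∈ S := by
    simp only [hSdef, mem_setOf_eq, zero_add, hψ0]
  have hopen : IsOpen S := by
    rw [isOpen_iff_mem_nhds]
    intro s₀ hs₀
    have hs₀' : ψ (s₀ + t) x = ψ s₀ (ψ t x) := hs₀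
    obtain ⟨K, U, hUnhds, hlipU⟩ :=
      ((hV.contDiffAt (x := ψ (s₀ + t) x)).of_le aux_one_le_inf).exists_lipschitzOnWith
    have hfev : ∀ᶠ r in 𝓝 s₀, HasDerivAt (fun s => ψ (s + t) x) (V (ψ (r + t) x)) r
        ∧ ψ (r + t) x ∈ U := by
      have hcont : ContinuousAt (fun s => ψ (s + t) x) s₀ := (hf s₀).continuousAt
      filter_upwards [hcont hUnhds] with r hr
      exact ⟨hf r, hr⟩
    have hgev : ∀ᶠ r in 𝓝 s₀, HasDerivAt (fun s => ψ s (ψ t x)) (V (ψ r (ψ t x))) r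
        ∧ ψ r (ψ t x) ∈ U := by
      have hcont : ContinuousAt (fun s => ψ s (ψ t x)) s₀ := (hg s₀).continuousAt
      have hU' : U ∈ 𝓝 (ψ s₀ (ψ t x)) := by rwa [← hs₀']
      filter_upwards [hcont hU'] with r hr
      exact ⟨hg r, hr⟩
    have heq := ODE_solution_unique_of_eventually (v := fun _ => V) (s := fun _ => U) (K := K)
      (Filter.Eventually.of_forall fun _ => hlipU) hfev hgev hs₀'
    exact heq
  have huniv : S = univ := IsClopen.eq_univ ⟨hclosed, hopen⟩ ⟨0, h0⟩
  have : s ∈ S := huniv ▸ mem_univ s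
  exact this

end Flow

/-- If `D = ⋂ᵢ ker ωⁱ` is a completely integrable (involutive) distribution and `X` a
complete vector field belonging to `D` with flow `Fl^X_t = φ t`, then for every `t`
the pulled-back forms `(Fl^X_t)*ωⁱ` vanish on `D`. -/
theorem pullback_forms_vanish_along_flow
    (n : ℕ) (ω : Fin n → E → E →L[ℝ] ℝ)
    (hω : ∀ i, ContDiff ℝ (⊤ : ℕ∞) (ω i))
    (hind : ∀ x : E, LinearIndependent ℝ fun i => ω i x)
    (D : E → Submodule ℝ E)
    (hD : ∀ x : E, D x = ⨅ i, LinearMap.ker (ω i x : E →ₗ[ℝ] ℝ))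
    (hinv : ∀ Y ∈ Sec D, ∀ Z ∈ Sec D, ∀ x : E, lieBracket Y Z x ∈ D x)
    (X : E → E) (hX : X ∈ Sec D)
    (φ : ℝ → E → E)
    (hφ0 : ∀ x : E, φ 0 x = x)
    (hφ : ∀ (t : ℝ) (x : E), HasDerivAt (fun s => φ s x) (X (φ t x)) t)
    (hφsm : ∀ t : ℝ, ContDiff ℝ (⊤ : ℕ∞) (φ t)) :
    ∀ (t : ℝ) (i : Fin n), ∀ x : E, ∀ v ∈ D x,
      ω i (φ t x) (fderiv ℝ (φ t) x v) = 0 := by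
  intro t1 i x v hv
  classical
  have hXsm : ContDiff ℝ (⊤:ℕ∞) X := hX.1
  set y : ℝ → E := fun t => φ t x with hydef
  set W : ℝ → E := fun t => fderiv ℝ (φ t) x v with hWdef
  have hyd : ∀ t, HasDerivAt y (X (y t)) t := fun t => hφ t x
  have hycont : Continuous y := continuous_iff_continuousAt.2 fun t => (hyd t).continuousAt
  have hgrp : ∀ t s : ℝ, φ (s + t) = fun z => φ s (φ t z) := by
    intro t s; funext z; exact aux_group X φ hXsm hφ0 hφ t s z
  have hWd : ∀ t, HasDerivAt W (fderiv ℝ X (y t) (W t)) t := by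
    intro t
    have hshift : (fun s => W (s + t)) = fun s => fderiv ℝ (φ s) (y t) (W t) := by
      funext s
      show fderiv ℝ (φ (s + t)) x v = fderiv ℝ (φ s) (y t) (W t)
      rw [hgrp t s]
      have hcomp : (fun z => φ s (φ t z)) = φ s ∘ φ t := rfl
      rw [hcomp, fderiv_comp x ((hφsm s).differentiable aux_inf_ne_zero (φ t x))
        ((hφsm t).differentiable aux_inf_ne_zero x)]
      rfl
    have h0 := aux_hasDerivAt_fderiv X φ hXsm hφ0 hφ hφsm (y t) (W t)
    rw [← hshift] at h0
    have h2 := HasDerivAt.comp_sub_const (f := fun s => W (s + t)) (x := t) (a := t)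
      (by simpa using h0)
    simpa using h2
  have hWcont : Continuous W := continuous_iff_continuousAt.2 fun t => (hWd t).continuousAt
  set g : ℝ → Fin n → ℝ := fun t j => ω j (y t) (W t) with hgdef
  set g' : ℝ → Fin n → ℝ := fun t j =>
    (fderiv ℝ (ω j) (y t)) (X (y t)) (W t) + ω j (y t) (fderiv ℝ X (y t) (W t)) with hg'def
  have hgd : ∀ t, HasDerivAt g (g' t) t := by
    intro t
    rw [hasDerivAt_pi]
    intro j
    have hc : HasDerivAt (fun t => ω j (y t)) (fderiv ℝ (ω j) (y t) (X (y t))) t := by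
      have hωd : HasFDerivAt (ω j) (fderiv ℝ (ω j) (y t)) (y t) :=
        (((hω j).differentiable aux_inf_ne_zero) (y t)).hasFDerivAt
      exact hωd.comp_hasDerivAt t (hyd t)
    exact hc.clm_apply (hWd t)
  have hgcont : Continuous g := continuous_iff_continuousAt.2 fun t => (hgd t).continuousAt
  set Ψ : Fin n → E → E →L[ℝ] ℝ := fun j z =>
    (fderiv ℝ (ω j) z) (X z) + (ω j z).comp (fderiv ℝ X z) with hΨdef
  have hkey : ∀ (j : Fin n) (z : E), ∀ u ∈ D z, Ψ j z u = 0 := by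
    intro j z u hu
    have h := aux_key ω hω hind D hD hinv X hX j z u hu
    simpa [hΨdef, ContinuousLinearMap.add_apply, ContinuousLinearMap.comp_apply] using h
  have hg'Ψ : ∀ t j, g' t j = Ψ j (y t) (W t) := by
    intro t j
    simp [hg'def, hΨdef, ContinuousLinearMap.add_apply, ContinuousLinearMap.comp_apply]
  have hΨcont : ∀ j, Continuous fun z => Ψ j z := by
    intro j
    apply Continuous.add
    · exact ((hω j).continuous_fderiv aux_inf_ne_zero).clm_apply hXsm.continuous
    · exact ((hω j).continuous).clm_comp (hXsm.continuous_fderiv aux_inf_ne_zero)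
  set Z := {t : ℝ | g t = 0} with hZdef
  have hZclosed : IsClosed Z := isClosed_eq hgcont continuous_const
  have hZ0 : (0:ℝ) ∈ Z := by
    have hφid : φ 0 = fun z : E => z := funext hφ0
    have hW0 : W 0 = v := by
      show fderiv ℝ (φ 0) x v = v
      rw [hφid, fderiv_id']
      rfl
    have hy0 : y 0 = x := hφ0 x
    show g 0 = 0
    funext j
    show ω j (y 0) (W 0) = 0
    rw [hy0, hW0]
    have hvk : v ∈ ⨅ i, LinearMap.ker (ω i x : E →ₗ[ℝ] ℝ) := by rw [← hD x]; exact hv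
    simpa using LinearMap.mem_ker.1 (Submodule.mem_iInf _ |>.1 hvk j)
  have hZopen : IsOpen Z := by
    rw [isOpen_iff_mem_nhds]
    intro t₀ ht₀
    obtain ⟨u', hu'⟩ := aux_dual_family (fun k => ω k (y t₀)) (hind (y t₀))
    set Mat : E → Matrix (Fin n) (Fin n) ℝ := fun z => Matrix.of fun k l => ω k z (u' l) with hMat
    have hMatcont : Continuous Mat := by
      apply continuous_matrix
      intro k l
      exact ((hω k).continuous).clm_apply continuous_const
    set dt : E → ℝ := fun z => (Mat z).det with hdtdef
    have hdtcont : Continuous dt := hMatcont.matrix_det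
    have hM1 : Mat (y t₀) = 1 := by
      ext k l
      simp [hMat, hu' k l, Matrix.one_apply]
    have hdt0 : dt (y t₀) = 1 := by rw [hdtdef]; show (Mat (y t₀)).det = 1; rw [hM1, Matrix.det_one]
    set e : E → Fin n → E := fun z i =>
      (dt z)⁻¹ • ∑ l, (Matrix.adjugate (Mat z) l i) • u' l with hedef
    have hdual : ∀ z, dt z ≠ 0 → ∀ k i, ω k z (e z i) = if k = i then 1 else 0 := by
      intro z hz k i
      have hmul := congrFun (congrFun (Matrix.mul_adjugate (Mat z)) k) i
      simp only [Matrix.mul_apply, Matrix.smul_apply, Matrix.one_apply, smul_eq_mul] at hmul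
      show ω k z ((dt z)⁻¹ • ∑ l, (Matrix.adjugate (Mat z) l i) • u' l) = _
      rw [map_smul, map_sum]
      simp only [map_smul, smul_eq_mul]
      have hsum : ∑ l, Matrix.adjugate (Mat z) l i * ω k z (u' l)
          = ∑ l, Mat z k l * Matrix.adjugate (Mat z) l i :=
        Finset.sum_congr rfl fun l _ => mul_comm _ _
      rw [hsum, hmul, ← mul_assoc, inv_mul_cancel₀ hz, one_mul]
    have hdecomp : ∀ z, dt z ≠ 0 → ∀ u : E, (u - ∑ i, (ω i z u) • e z i) ∈ D z := by
      intro z hz u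
      rw [hD]
      refine Submodule.mem_iInf _ |>.2 fun k => LinearMap.mem_ker.2 ?_
      rw [map_sub, map_sum]
      simp only [ContinuousLinearMap.coe_coe, map_smul, smul_eq_mul, hdual z hz]
      simp [Finset.sum_ite_eq, mul_ite]
    have hecont : ∀ i, ContinuousAt (fun z => e z i) (y t₀) := by
      intro i
      apply ContinuousAt.smul
      · exact (hdtcont.continuousAt).inv₀ (by rw [hdt0]; norm_num)
      · have hadj : Continuous fun z => Matrix.adjugate (Mat z) := hMatcont.matrix_adjugate
        have hentry : ∀ l, Continuous fun z => Matrix.adjugate (Mat z) l i := fun l =>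
          ((continuous_apply i).comp ((continuous_apply l).comp hadj))
        have hsum : Continuous fun z => ∑ l, (Matrix.adjugate (Mat z) l i) • u' l :=
          continuous_finset_sum _ fun l _ => (hentry l).smul continuous_const
        exact hsum.continuousAt
    set F : ℝ → ℝ := fun τ => ∑ j, ∑ l, |Ψ j (y τ) (e (y τ) l)| with hFdef
    have happly : ∀ (j : Fin n) (l : Fin n), ContinuousAt (fun τ => Ψ j (y τ) (e (y τ) l)) t₀ := by
      intro j l
      have h1 : ContinuousAt (fun τ => Ψ j (y τ)) t₀ :=
        ((hΨcont j).continuousAt).comp hycont.continuousAt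
      have h2 : ContinuousAt (fun τ => e (y τ) l) t₀ :=
        (hecont l).comp hycont.continuousAt
      have h3 : (fun τ => Ψ j (y τ) (e (y τ) l))
          = (fun p : (E →L[ℝ] ℝ) × E => p.1 p.2) ∘ fun τ => (Ψ j (y τ), e (y τ) l) := rfl
      rw [h3]
      exact (isBoundedBilinearMap_apply.continuous.continuousAt).comp (h1.prodMk h2)
    have hFcont : ContinuousAt F t₀ := by
      apply tendsto_finset_sum
      intro j _
      apply tendsto_finset_sum
      intro l _
      exact (happly j l).abs
    set K := F t₀ + 1 with hKdef
    have hF0 : 0 ≤ F t₀ := Finset.sum_nonneg fun j _ => Finset.sum_nonneg fun l _ => abs_nonneg _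
    have hKpos : 0 < K := by rw [hKdef]; linarith
    have hev : ∀ᶠ τ in 𝓝 t₀, dt (y τ) ≠ 0 ∧ F τ ≤ K := by
      have h1 : ContinuousAt (fun τ => dt (y τ)) t₀ :=
        hdtcont.continuousAt.comp hycont.continuousAt
      have h2 : ∀ᶠ τ in 𝓝 t₀, dt (y τ) > 1/2 :=
        h1 (Ioi_mem_nhds (show (1:ℝ)/2 < dt (y t₀) by rw [hdt0]; norm_num))
      have h3 : ∀ᶠ τ in 𝓝 t₀, F τ < K := hFcont (Iio_mem_nhds (by rw [hKdef]; linarith))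
      filter_upwards [h2, h3] with τ hτ1 hτ2
      exact ⟨by linarith, hτ2.le⟩
    obtain ⟨δ, hδpos, hδprop⟩ := Metric.eventually_nhds_iff.1 hev
    have hbound : ∀ τ, dist τ t₀ < δ → ‖g' τ‖ ≤ K * ‖g τ‖ := by
      intro τ hτ
      obtain ⟨hdtne, hFle⟩ := hδprop hτ
      have hKg : 0 ≤ K * ‖g τ‖ := mul_nonneg hKpos.le (norm_nonneg _)
      rw [pi_norm_le_iff_of_nonneg hKg]
      intro j
      rw [Real.norm_eq_abs]
      have hjrw : g' τ j = Ψ j (y τ) (W τ) := hg'Ψ τ j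
      rw [hjrw]
      have hdc := hdecomp (y τ) hdtne (W τ)
      have hzero := hkey j (y τ) _ hdc
      have hsplit : Ψ j (y τ) (W τ) = ∑ l, (ω l (y τ) (W τ)) * Ψ j (y τ) (e (y τ) l) := by
        have hWτ : W τ = (W τ - ∑ l, (ω l (y τ) (W τ)) • e (y τ) l)
            + ∑ l, (ω l (y τ) (W τ)) • e (y τ) l := by abel
        calc Ψ j (y τ) (W τ) = Ψ j (y τ) ((W τ - ∑ l, (ω l (y τ) (W τ)) • e (y τ) l)
            + ∑ l, (ω l (y τ) (W τ)) • e (y τ) l) := by rw [← hWτ]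
          _ = Ψ j (y τ) (W τ - ∑ l, (ω l (y τ) (W τ)) • e (y τ) l)
            + Ψ j (y τ) (∑ l, (ω l (y τ) (W τ)) • e (y τ) l) := map_add _ _ _
          _ = ∑ l, (ω l (y τ) (W τ)) * Ψ j (y τ) (e (y τ) l) := by
              rw [hzero, zero_add, map_sum]
              exact Finset.sum_congr rfl fun l _ => by rw [map_smul, smul_eq_mul]
      rw [hsplit]
      have habs1 : ∀ l : Fin n, |ω l (y τ) (W τ)| ≤ ‖g τ‖ := by
        intro l
        have h5 := norm_le_pi_norm (g τ) l
        simpa [hgdef, Real.norm_eq_abs] using h5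
      have hinner : ∑ l, |Ψ j (y τ) (e (y τ) l)| ≤ F τ :=
        Finset.single_le_sum (f := fun j' => ∑ l, |Ψ j' (y τ) (e (y τ) l)|)
          (fun j' _ => Finset.sum_nonneg fun l _ => abs_nonneg _) (Finset.mem_univ j)
      calc |∑ l, (ω l (y τ) (W τ)) * Ψ j (y τ) (e (y τ) l)|
          ≤ ∑ l, |(ω l (y τ) (W τ)) * Ψ j (y τ) (e (y τ) l)| := Finset.abs_sum_le_sum_abs _ _
        _ = ∑ l, |ω l (y τ) (W τ)| * |Ψ j (y τ) (e (y τ) l)| :=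
            Finset.sum_congr rfl fun l _ => abs_mul _ _
        _ ≤ ∑ l, ‖g τ‖ * |Ψ j (y τ) (e (y τ) l)| :=
            Finset.sum_le_sum fun l _ =>
              mul_le_mul_of_nonneg_right (habs1 l) (abs_nonneg _)
        _ = ‖g τ‖ * ∑ l, |Ψ j (y τ) (e (y τ) l)| := by rw [Finset.mul_sum]
        _ ≤ ‖g τ‖ * F τ := mul_le_mul_of_nonneg_left hinner (norm_nonneg _)
        _ ≤ ‖g τ‖ * K := mul_le_mul_of_nonneg_left hFle (norm_nonneg _)
        _ = K * ‖g τ‖ := mul_comm _ _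
    have hgt₀ : g t₀ = 0 := ht₀
    have hforward : ∀ τ ∈ Icc t₀ (t₀ + δ/2), g τ = 0 := by
      intro τ hτ
      have h := norm_le_gronwallBound_of_norm_deriv_right_le
        (f := g) (f' := g') (δ := 0) (K := K) (ε := 0) (a := t₀) (b := t₀ + δ/2)
        hgcont.continuousOn
        (fun r _ => (hgd r).hasDerivWithinAt)
        (by rw [hgt₀]; simp)
        (fun r hr => by
          have hd : dist r t₀ < δ := by
            rw [Real.dist_eq, abs_of_nonneg (by linarith [hr.1] : (0:ℝ) ≤ r - t₀)]
            linarith [hr.2]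
          have h6 := hbound r hd
          rw [add_zero]
          exact h6)
        τ hτ
      rw [gronwallBound_ε0_δ0] at h
      exact norm_le_zero_iff.1 h
    have hbackward : ∀ τ ∈ Icc (t₀ - δ/2) t₀, g τ = 0 := by
      set h : ℝ → Fin n → ℝ := fun s => g (2*t₀ - s) with hhdef
      have hhd : ∀ s, HasDerivAt h (-(g' (2*t₀ - s))) s := fun s =>
        HasDerivAt.comp_const_sub (2*t₀) s (hgd (2*t₀ - s))
      have hres := norm_le_gronwallBound_of_norm_deriv_right_le
        (f := h) (f' := fun s => -(g' (2*t₀ - s))) (δ := 0) (K := K) (ε := 0)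
        (a := t₀) (b := t₀ + δ/2)
        (continuous_iff_continuousAt.2 fun s => (hhd s).continuousAt).continuousOn
        (fun r _ => (hhd r).hasDerivWithinAt)
        (by
          show ‖g (2*t₀ - t₀)‖ ≤ 0
          have he : 2*t₀ - t₀ = t₀ := by ring
          rw [he, hgt₀]
          simp)
        (fun r hr => by
          have hd : dist (2*t₀ - r) t₀ < δ := by
            rw [Real.dist_eq]
            have he : 2*t₀ - r - t₀ = t₀ - r := by ring
            rw [he, abs_of_nonpos (by linarith [hr.1] : t₀ - r ≤ 0)]
            linarith [hr.2]
          have h6 := hbound (2*t₀ - r) hd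
          show ‖-(g' (2*t₀ - r))‖ ≤ K * ‖g (2*t₀ - r)‖ + 0
          rw [norm_neg, add_zero]
          exact h6)
      intro τ hτ
      have hs : 2*t₀ - τ ∈ Icc t₀ (t₀ + δ/2) := ⟨by linarith [hτ.2], by linarith [hτ.1]⟩
      have h7 := hres (2*t₀ - τ) hs
      rw [gronwallBound_ε0_δ0] at h7
      have h8 : h (2*t₀ - τ) = 0 := norm_le_zero_iff.1 h7
      have h9 : h (2*t₀ - τ) = g τ := by
        have he2 : 2*t₀ - (2*t₀ - τ) = τ := by ring
        show g (2*t₀ - (2*t₀ - τ)) = g τ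
        rw [he2]
      rw [← h9, h8]
    have hIcc : Icc (t₀ - δ/2) (t₀ + δ/2) ∈ 𝓝 t₀ := Icc_mem_nhds (by linarith) (by linarith)
    refine mem_of_superset hIcc ?_
    intro τ hτ
    rcases le_total τ t₀ with hle | hle
    · exact hbackward τ ⟨hτ.1, hle⟩
    · exact hforward τ ⟨hle, hτ.2⟩
  have huniv : Z = univ := IsClopen.eq_univ ⟨hZclosed, hZopen⟩ ⟨0, hZ0⟩
  have ht1 : t1 ∈ Z := huniv ▸ mem_univ t1
  have := congrFun (ht1 : g t1 = 0) i
  exact this
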